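/- Let J be a nonempty proper subset of {0,…,d}. Then A_J ∩ 𝔟 = {z ∈ A_J : ρ'(z)(δ_0) = 0} is equal to the ideal of the (commutative) algebra A_J generated by the sorting relations ι(E_{ij})ι(E_{kl}) − ι(E_{il})ι(E_{kj}) with i, k ∈ J and j, l ∉ J. -/

import Mathlib

open UniversalEnvelopingAlgebra

attribute [local instance 100] LieRing.ofAssociativeRing

namespace ST10
set_option linter.unusedSectionVars false
set_option maxHeartbeats 1000000

variable {K : Type} [Field K] [CharZero K] {m : ℕ}

noncomputable def xg (K : Type) [Field K] {m : ℕ} (p : Fin m × Fin m) :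
    UniversalEnvelopingAlgebra K (Matrix (Fin m) (Fin m) K) :=
  ι K (Matrix.single p.1 p.2 (1:K))

def Ok (J : Set (Fin m)) (p : Fin m × Fin m) : Prop := p.1 ∈ J ∧ p.2 ∉ J

lemma commute_xg {J : Set (Fin m)} {p q : Fin m × Fin m} (hp : Ok J p) (hq : Ok J q) :
    Commute (xg K p) (xg K q) := by
  have h1 : p.2 ≠ q.1 := fun h => hp.2 (h ▸ hq.1)
  have h2 : q.2 ≠ p.1 := fun h => hq.2 (h ▸ hp.1)
  have hb : ⁅(Matrix.single p.1 p.2 (1:K)), (Matrix.single q.1 q.2 (1:K))⁆ = 0 := by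
    rw [Ring.lie_def, Matrix.single_mul_single_of_ne (h := h1),
      Matrix.single_mul_single_of_ne (h := h2), sub_zero]
  have := (ι (R := K) (L := Matrix (Fin m) (Fin m) K)).map_lie
    (x := Matrix.single p.1 p.2 (1:K)) (y := Matrix.single q.1 q.2 (1:K))
  rw [hb, map_zero, Ring.lie_def] at this
  unfold Commute SemiconjBy xg
  exact sub_eq_zero.1 this.symm

def nu : List (Fin m × Fin m) → (Fin m → ℤ)
  | [] => 0
  | p :: T => nu T + Pi.single p.1 1 - Pi.single p.2 1

lemma nu_apply (L : List (Fin m × Fin m)) (k : Fin m) :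
    nu L k = ((L.map Prod.fst).count k : ℤ) - ((L.map Prod.snd).count k : ℤ) := by
  induction L with
  | nil => simp [nu]
  | cons p T ih =>
      simp only [nu, Pi.add_apply, Pi.sub_apply, ih, List.map_cons, List.count_cons,
        Pi.single_apply, beq_iff_eq]
      push_cast
      have ec : ∀ (a b : Fin m), (if a = b then (1:ℤ) else 0) = if b = a then 1 else 0 := by
        intro a b
        by_cases h : a = b
        · rw [if_pos h, if_pos h.symm]
        · rw [if_neg h, if_neg fun hh => h hh.symm]
      rw [ec p.1 k, ec p.2 k]
      ring

def Lam (s : Multiset (Fin m)) : ℤ :=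
  (-1) ^ (Multiset.card s) * ∏ j : Fin m, ((s.count j).factorial : ℤ)

lemma Lam_cons (a : Fin m) (s : Multiset (Fin m)) :
    Lam (a ::ₘ s) = -((s.count a : ℤ) + 1) * Lam s := by
  unfold Lam
  rw [Multiset.card_cons, pow_succ,
    ← Finset.mul_prod_erase Finset.univ (fun j => (((a ::ₘ s).count j).factorial : ℤ))
      (Finset.mem_univ a),
    ← Finset.mul_prod_erase Finset.univ (fun j => ((s.count j).factorial : ℤ))
      (Finset.mem_univ a)]
  have h1 : ∏ j ∈ Finset.univ.erase a, (((a ::ₘ s).count j).factorial : ℤ)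
      = ∏ j ∈ Finset.univ.erase a, ((s.count j).factorial : ℤ) := by
    refine Finset.prod_congr rfl fun j hj => ?_
    rw [Multiset.count_cons_of_ne (Finset.ne_of_mem_erase hj)]
  rw [h1, Multiset.count_cons_self]
  push_cast [Nat.factorial_succ]
  ring

lemma Lam_ne_zero (s : Multiset (Fin m)) : Lam s ≠ 0 := by
  unfold Lam
  refine mul_ne_zero (pow_ne_zero _ (by norm_num)) ?_
  rw [Finset.prod_ne_zero_iff]
  intro j _
  exact_mod_cast (Nat.factorial_pos _).ne'

lemma rho_prod
    (ρ' : UniversalEnvelopingAlgebra K (Matrix (Fin m) (Fin m) K) →ₐ[K]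
        Module.End K ((Fin m → ℤ) →₀ K))
    (hρ'₁ : ∀ (i j : Fin m), i ≠ j → ∀ ν : Fin m → ℤ,
      ρ' (ι K (Matrix.single i j (1:K))) (Finsupp.single ν (1:K)) =
        (ν j - 1) • Finsupp.single (ν + Pi.single i 1 - Pi.single j 1) (1:K))
    {J : Set (Fin m)} (L : List (Fin m × Fin m)) (hL : ∀ p ∈ L, Ok J p) :
    ρ' ((L.map (xg K)).prod) (Finsupp.single (0 : Fin m → ℤ) (1:K)) =
      Lam ((L.map Prod.snd : List (Fin m)) : Multiset (Fin m)) •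
        Finsupp.single (nu L) (1:K) := by
  induction L with
  | nil =>
      simp only [List.map_nil, List.prod_nil, map_one, Module.End.one_apply, Multiset.coe_nil]
      rw [show nu (m := m) [] = 0 from rfl, show Lam (m := m) 0 = 1 from by simp [Lam], one_smul]
  | cons p T ih =>
      have hp : Ok J p := hL p (List.mem_cons_self)
      have hT : ∀ q ∈ T, Ok J q := fun q hq => hL q (List.mem_cons_of_mem _ hq)
      have hne : p.1 ≠ p.2 := fun h => hp.2 (h ▸ hp.1)
      rw [List.map_cons, List.prod_cons, map_mul, Module.End.mul_apply, ih hT,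
        map_zsmul, show xg K p = ι K (Matrix.single p.1 p.2 (1:K)) from rfl,
        hρ'₁ p.1 p.2 hne (nu T)]
      have hc : nu T p.2 = -((T.map Prod.snd).count p.2 : ℤ) := by
        rw [nu_apply]
        have h0 : (T.map Prod.fst).count p.2 = 0 := by
          rw [List.count_eq_zero]
          intro hmem
          obtain ⟨q, hq, hq2⟩ := List.mem_map.1 hmem
          exact hp.2 (hq2 ▸ (hT q hq).1)
        rw [h0]; push_cast; ring
      rw [hc, smul_smul]
      have hsnd : ((List.map Prod.snd (p :: T) : List (Fin m)) : Multiset (Fin m))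
          = p.2 ::ₘ ((T.map Prod.snd : List (Fin m)) : Multiset (Fin m)) := by
        simp
      rw [hsnd, Lam_cons]
      have hcount : (((T.map Prod.snd : List (Fin m)) : Multiset (Fin m))).count p.2
          = (T.map Prod.snd).count p.2 := by
        simp [Multiset.coe_count]
      rw [hcount]
      congr 1
      ring

section WithJ

variable {J : Set (Fin m)}
variable {AJ : Subalgebra K (UniversalEnvelopingAlgebra K (Matrix (Fin m) (Fin m) K))}

def GenIn (J : Set (Fin m))
    (AJ : Subalgebra K (UniversalEnvelopingAlgebra K (Matrix (Fin m) (Fin m) K))) : Prop :=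
  ∀ p : Fin m × Fin m, Ok J p → xg K p ∈ AJ

lemma prod_mem (hgen : GenIn J AJ) (L : List (Fin m × Fin m)) (hL : ∀ p ∈ L, Ok J p) :
    (L.map (xg K)).prod ∈ AJ := by
  induction L with
  | nil => simpa using one_mem AJ
  | cons p T ih =>
      rw [List.map_cons, List.prod_cons]
      exact mul_mem (hgen p (hL p (List.mem_cons_self)))
        (ih fun q hq => hL q (List.mem_cons_of_mem _ hq))

lemma pairwise_comm (L : List (Fin m × Fin m)) (hL : ∀ p ∈ L, Ok J p) :
    (L.map (xg K)).Pairwise Commute := by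
  rw [List.pairwise_map]
  exact List.pairwise_of_forall_mem_list fun p hp q hq => commute_xg (hL p hp) (hL q hq)

lemma commute_prod (L : List (Fin m × Fin m)) (hL : ∀ p ∈ L, Ok J p)
    {p : Fin m × Fin m} (hp : Ok J p) : Commute (xg K p) ((L.map (xg K)).prod) := by
  refine Commute.list_prod_right _ _ fun u hu => ?_
  obtain ⟨q, hq, rfl⟩ := List.mem_map.1 hu
  exact commute_xg hp (hL q hq)

lemma prod_perm (L L' : List (Fin m × Fin m)) (hL : ∀ p ∈ L, Ok J p) (hperm : L.Perm L') :
    (L.map (xg K)).prod = (L'.map (xg K)).prod :=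
  (hperm.map (xg K)).prod_eq' (pairwise_comm L hL)

def Rel (J : Set (Fin m))
    (AJ : Subalgebra K (UniversalEnvelopingAlgebra K (Matrix (Fin m) (Fin m) K))) :
    Set (UniversalEnvelopingAlgebra K (Matrix (Fin m) (Fin m) K)) :=
  {w | ∃ a ∈ AJ, ∃ i ∈ J, ∃ k ∈ J, ∃ j ∉ J, ∃ l ∉ J,
      w = a * (xg K (i, j) * xg K (k, l) - xg K (i, l) * xg K (k, j))}

lemma mul_mem_span (g : UniversalEnvelopingAlgebra K (Matrix (Fin m) (Fin m) K))
    (hg : g ∈ AJ) {w : UniversalEnvelopingAlgebra K (Matrix (Fin m) (Fin m) K)}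
    (hw : w ∈ Submodule.span K (Rel J AJ)) :
    g * w ∈ Submodule.span K (Rel J AJ) := by
  induction hw using Submodule.span_induction with
  | mem w hw =>
      obtain ⟨a, ha, i, hi, k, hk, j, hj, l, hl, rfl⟩ := hw
      exact Submodule.subset_span
        ⟨g * a, mul_mem hg ha, i, hi, k, hk, j, hj, l, hl, (mul_assoc _ _ _).symm⟩
  | zero => simp
  | add u v _ _ hu hv => rw [mul_add]; exact add_mem hu hv
  | smul c u _ hu => rw [mul_smul_comm]; exact Submodule.smul_mem _ c hu

lemma conn (hgen : GenIn J AJ) :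
    ∀ (L L' : List (Fin m × Fin m)), (∀ p ∈ L, Ok J p) → (∀ p ∈ L', Ok J p) →
    (L.map Prod.fst).Perm (L'.map Prod.fst) → (L.map Prod.snd).Perm (L'.map Prod.snd) →
    (L.map (xg K)).prod - (L'.map (xg K)).prod ∈ Submodule.span K (Rel J AJ) := by
  intro L
  induction L with
  | nil =>
      intro L' _ _ h1 _
      have : L'.map Prod.fst = [] := h1.symm.eq_nil
      have hL' : L' = [] := by simpa using congrArg List.length this
      rw [hL']
      simp
  | cons p T ih =>
      intro L' hL hL' h1 h2
      by_cases hmem : p ∈ L'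
      · -- case A
        obtain ⟨s, t, rfl⟩ := List.append_of_mem hmem
        set L'' := s ++ t with hL''def
        have hperm : (s ++ p :: t).Perm (p :: L'') := List.perm_middle
        have hokL'' : ∀ q ∈ L'', Ok J q := by
          intro q hq
          rcases List.mem_append.1 hq with h | h
          · exact hL' q (List.mem_append.2 (Or.inl h))
          · exact hL' q (List.mem_append.2 (Or.inr (List.mem_cons_of_mem _ h)))
        have hprodL' : ((s ++ p :: t).map (xg K)).prod = xg K p * (L''.map (xg K)).prod := by
          rw [prod_perm (s ++ p :: t) (p :: L'') hL' hperm, List.map_cons, List.prod_cons]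
        have h1' : (T.map Prod.fst).Perm (L''.map Prod.fst) := by
          have h := h1.trans (hperm.map Prod.fst)
          rw [List.map_cons, List.map_cons] at h
          exact h.cons_inv
        have h2' : (T.map Prod.snd).Perm (L''.map Prod.snd) := by
          have h := h2.trans (hperm.map Prod.snd)
          rw [List.map_cons, List.map_cons] at h
          exact h.cons_inv
        have hIH := ih L'' (fun q hq => hL q (List.mem_cons_of_mem _ hq)) hokL'' h1' h2'
        have hsplit : ((p :: T).map (xg K)).prod - ((s ++ p :: t).map (xg K)).prod
            = xg K p * ((T.map (xg K)).prod - (L''.map (xg K)).prod) := by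
          rw [List.map_cons, List.prod_cons, hprodL', mul_sub]
        rw [hsplit]
        exact mul_mem_span _ (hgen p (hL p (List.mem_cons_self))) hIH
      · -- case B
        have hpOk : Ok J p := hL p (List.mem_cons_self)
        have hmem1 : p.1 ∈ L'.map Prod.fst :=
          h1.subset (List.mem_map.2 ⟨p, List.mem_cons_self, rfl⟩)
        obtain ⟨p', hp'L', hp'1⟩ := List.mem_map.1 hmem1
        have hmem2 : p.2 ∈ L'.map Prod.snd :=
          h2.subset (List.mem_map.2 ⟨p, List.mem_cons_self, rfl⟩)
        obtain ⟨q', hq'L', hq'2⟩ := List.mem_map.1 hmem2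
        have hp'2 : p'.2 ≠ p.2 := by
          intro h
          exact hmem (by rw [show p = p' from Prod.ext hp'1.symm h.symm]; exact hp'L')
        have hq'1 : q'.1 ≠ p.1 := by
          intro h
          exact hmem (by rw [show p = q' from Prod.ext h.symm hq'2.symm]; exact hq'L')
        have hneq : q' ≠ p' := fun h => hp'2 (h ▸ hq'2)
        obtain ⟨s, t, hst⟩ := List.append_of_mem hp'L'
        have hq'mem : q' ∈ s ++ t := by
          have : q' ∈ s ++ p' :: t := hst ▸ hq'L'
          rcases List.mem_append.1 this with h | h
          · exact List.mem_append.2 (Or.inl h)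
          · rcases List.mem_cons.1 h with h' | h'
            · exact absurd h' hneq
            · exact List.mem_append.2 (Or.inr h')
        obtain ⟨s2, t2, hst2⟩ := List.append_of_mem hq'mem
        set L3 := s2 ++ t2 with hL3def
        have hmemL3 : ∀ q ∈ L3, q ∈ L' := by
          intro q hq
          have h1' : q ∈ s ++ t := by
            rw [hst2]
            rcases List.mem_append.1 hq with h | h
            · exact List.mem_append.2 (Or.inl h)
            · exact List.mem_append.2 (Or.inr (List.mem_cons_of_mem _ h))
          rw [hst]
          rcases List.mem_append.1 h1' with h | h
          · exact List.mem_append.2 (Or.inl h)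
          · exact List.mem_append.2 (Or.inr (List.mem_cons_of_mem _ h))
        have hperm1 : L'.Perm (p' :: q' :: L3) := by
          have ha : L'.Perm (p' :: (s ++ t)) := by rw [hst]; exact List.perm_middle
          have hb : (s ++ t).Perm (q' :: L3) := by rw [hst2]; exact List.perm_middle
          exact ha.trans (hb.cons p')
        have hokL3 : ∀ q ∈ L3, Ok J q := fun q hq => hL' q (hmemL3 q hq)
        have hokp' : Ok J p' := hL' p' hp'L'
        have hokq' : Ok J q' := hL' q' hq'L'
        have hokaux : Ok J ((q'.1, p'.2) : Fin m × Fin m) := ⟨hokq'.1, hokp'.2⟩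
        set M : List (Fin m × Fin m) := (q'.1, p'.2) :: L3 with hMdef
        have hokM : ∀ q ∈ M, Ok J q := by
          intro q hq
          rcases List.mem_cons.1 hq with h | h
          · exact h ▸ hokaux
          · exact hokL3 q h
        have hfst : (T.map Prod.fst).Perm (M.map Prod.fst) := by
          have h := h1.trans (hperm1.map Prod.fst)
          rw [List.map_cons, List.map_cons, List.map_cons, hp'1] at h
          exact h.cons_inv
        have hsnd : (T.map Prod.snd).Perm (M.map Prod.snd) := by
          have h := h2.trans (hperm1.map Prod.snd)
          rw [List.map_cons, List.map_cons, List.map_cons, hq'2] at h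
          have h' := h.trans (List.Perm.swap p.2 p'.2 (L3.map Prod.snd))
          exact h'.cons_inv
        have hIH := ih M (fun q hq => hL q (List.mem_cons_of_mem _ hq)) hokM hfst hsnd
        have hrel : (L3.map (xg K)).prod *
            (xg K (p.1, p'.2) * xg K (q'.1, p.2) - xg K (p.1, p.2) * xg K (q'.1, p'.2))
            ∈ Submodule.span K (Rel J AJ) :=
          Submodule.subset_span
            ⟨(L3.map (xg K)).prod, prod_mem hgen L3 hokL3,
              p.1, hpOk.1, q'.1, hokq'.1, p'.2, hokp'.2, p.2, hpOk.2, rfl⟩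
        have key : ((p :: T).map (xg K)).prod - (L'.map (xg K)).prod
            = xg K p * ((T.map (xg K)).prod - (M.map (xg K)).prod)
              - (L3.map (xg K)).prod *
                (xg K (p.1, p'.2) * xg K (q'.1, p.2) - xg K (p.1, p.2) * xg K (q'.1, p'.2)) := by
          have hprodL' : (L'.map (xg K)).prod
              = xg K (p.1, p'.2) * (xg K (q'.1, p.2) * (L3.map (xg K)).prod) := by
            rw [prod_perm L' (p' :: q' :: L3) hL' hperm1]
            rw [show p' = ((p.1, p'.2) : Fin m × Fin m) from Prod.ext hp'1 rfl,
              show q' = ((q'.1, p.2) : Fin m × Fin m) from Prod.ext rfl hq'2]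
            simp [List.map_cons, List.prod_cons, mul_assoc]
          have hcomm1 : Commute ((L3.map (xg K)).prod)
              (xg K (p.1, p.2) * xg K (q'.1, p'.2)) :=
            Commute.mul_right ((commute_prod L3 hokL3 (p := (p.1, p.2)) ⟨hpOk.1, hpOk.2⟩).symm)
              ((commute_prod L3 hokL3 hokaux).symm)
          have hcomm2 : Commute ((L3.map (xg K)).prod)
              (xg K (p.1, p'.2) * xg K (q'.1, p.2)) :=
            Commute.mul_right ((commute_prod L3 hokL3 (p := (p.1, p'.2)) ⟨hpOk.1, hokp'.2⟩).symm)
              ((commute_prod L3 hokL3 (p := (q'.1, p.2)) ⟨hokq'.1, hpOk.2⟩).symm)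
          rw [List.map_cons, List.prod_cons, hprodL', hMdef, List.map_cons, List.prod_cons]
          rw [mul_sub, mul_sub, hcomm1.eq, hcomm2.eq]
          rw [show xg K p = xg K ((p.1, p.2) : Fin m × Fin m) from rfl]
          simp only [← mul_assoc]
          abel
        rw [key]
        exact sub_mem (mul_mem_span _ (hgen p hpOk) hIH) hrel

lemma perm_of_nu_eq (L L' : List (Fin m × Fin m))
    (hL : ∀ p ∈ L, Ok J p) (hL' : ∀ p ∈ L', Ok J p) (h : nu L = nu L') :
    (L.map Prod.fst).Perm (L'.map Prod.fst) ∧ (L.map Prod.snd).Perm (L'.map Prod.snd) := by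
  have fst0 : ∀ (M : List (Fin m × Fin m)), (∀ p ∈ M, Ok J p) → ∀ k ∉ J,
      (M.map Prod.fst).count k = 0 := by
    intro M hM k hk
    rw [List.count_eq_zero]
    intro hmem
    obtain ⟨q, hq, rfl⟩ := List.mem_map.1 hmem
    exact hk (hM q hq).1
  have snd0 : ∀ (M : List (Fin m × Fin m)), (∀ p ∈ M, Ok J p) → ∀ k ∈ J,
      (M.map Prod.snd).count k = 0 := by
    intro M hM k hk
    rw [List.count_eq_zero]
    intro hmem
    obtain ⟨q, hq, rfl⟩ := List.mem_map.1 hmem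
    exact (hM q hq).2 hk
  constructor
  · rw [List.perm_iff_count]
    intro k
    by_cases hk : k ∈ J
    · have := congrFun h k
      rw [nu_apply, nu_apply, snd0 L hL k hk, snd0 L' hL' k hk] at this
      exact_mod_cast by simpa using this
    · rw [fst0 L hL k hk, fst0 L' hL' k hk]
  · rw [List.perm_iff_count]
    intro k
    by_cases hk : k ∈ J
    · rw [snd0 L hL k hk, snd0 L' hL' k hk]
    · have := congrFun h k
      rw [nu_apply, nu_apply, fst0 L hL k hk, fst0 L' hL' k hk] at this
      exact_mod_cast by simpa using this

lemma exists_pairs :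
    ∀ (l : List (UniversalEnvelopingAlgebra K (Matrix (Fin m) (Fin m) K))),
    (∀ u ∈ l, ∃ i ∈ J, ∃ j ∉ J, u = ι K (Matrix.single i j (1:K))) →
    ∃ Lp : List (Fin m × Fin m), (∀ p ∈ Lp, Ok J p) ∧ (Lp.map (xg K)).prod = l.prod := by
  intro l
  induction l with
  | nil => exact fun _ => ⟨[], by simp, by simp⟩
  | cons u l ih =>
      intro hl
      obtain ⟨Lp, hok, hprod⟩ := ih fun v hv => hl v (List.mem_cons_of_mem _ hv)
      obtain ⟨i, hi, j, hj, rfl⟩ := hl u (List.mem_cons_self)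
      refine ⟨(i, j) :: Lp, ?_, ?_⟩
      · intro q hq
        rcases List.mem_cons.1 hq with h | h
        · exact h ▸ ⟨hi, hj⟩
        · exact hok q h
      · rw [List.map_cons, List.prod_cons, hprod, List.prod_cons]
        rfl

end WithJ

end ST10
theorem stmt_10 (K : Type) [Field K] [CharZero K] (d : ℕ) (hd : 1 ≤ d)
    (ρ' : UniversalEnvelopingAlgebra K (Matrix (Fin (d+1)) (Fin (d+1)) K) →ₐ[K]
        Module.End K ((Fin (d+1) → ℤ) →₀ K))
    (hρ'₁ : ∀ (i j : Fin (d+1)), i ≠ j → ∀ ν : Fin (d+1) → ℤ,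
      ρ' (ι K (Matrix.single i j (1:K))) (Finsupp.single ν (1:K)) =
        (ν j - 1) • Finsupp.single (ν + Pi.single i 1 - Pi.single j 1) (1:K))
    (hρ'₂ : ∀ (k : Fin (d+1)) (ν : Fin (d+1) → ℤ),
      ρ' (ι K (Matrix.single k k (1:K))) (Finsupp.single ν (1:K)) =
        ν k • Finsupp.single ν (1:K))
    (J : Set (Fin (d+1))) (hJ : J.Nonempty) (hJ' : J ≠ Set.univ)
    (AJ : Subalgebra K (UniversalEnvelopingAlgebra K (Matrix (Fin (d+1)) (Fin (d+1)) K)))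
    (hAJ : AJ = Algebra.adjoin K
      {w | ∃ i ∈ J, ∃ j ∉ J, w = ι K (Matrix.single i j (1:K))}) :
    {z : UniversalEnvelopingAlgebra K (Matrix (Fin (d+1)) (Fin (d+1)) K) |
        z ∈ AJ ∧ ρ' z (Finsupp.single (0 : Fin (d+1) → ℤ) (1:K)) = 0} =
      ↑(Submodule.span K
        {w : UniversalEnvelopingAlgebra K (Matrix (Fin (d+1)) (Fin (d+1)) K) |
          ∃ a ∈ AJ, ∃ i ∈ J, ∃ k ∈ J, ∃ j ∉ J, ∃ l ∉ J,
            w = a * (ι K (Matrix.single i j (1:K)) *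
                      ι K (Matrix.single k l (1:K)) -
                     ι K (Matrix.single i l (1:K)) *
                      ι K (Matrix.single k j (1:K)))}) := by
  classical
  have hgen : ST10.GenIn J AJ := by
    intro p hp
    rw [hAJ]
    exact Algebra.subset_adjoin ⟨p.1, hp.1, p.2, hp.2, rfl⟩
  have hsetRel : {w : UniversalEnvelopingAlgebra K (Matrix (Fin (d+1)) (Fin (d+1)) K) | ∃ a ∈ AJ, ∃ i ∈ J, ∃ k ∈ J, ∃ j ∉ J, ∃ l ∉ J,
          w = a * (ι K (Matrix.single i j (1:K)) *
                    ι K (Matrix.single k l (1:K)) -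
                   ι K (Matrix.single i l (1:K)) *
                    ι K (Matrix.single k j (1:K)))}
      = ST10.Rel J AJ := rfl
  rw [hsetRel]
  apply Set.eq_of_subset_of_subset
  · -- hard direction
    intro z hz
    obtain ⟨hzA, hz0⟩ := hz
    rw [SetLike.mem_coe]
    -- express z as a combination of monomials
    have hzA' : z ∈ Submodule.span K
        ((Submonoid.closure {w : UniversalEnvelopingAlgebra K (Matrix (Fin (d+1)) (Fin (d+1)) K) | ∃ i ∈ J, ∃ j ∉ J,
            w = ι K (Matrix.single i j (1:K))} : Submonoid (UniversalEnvelopingAlgebra K (Matrix (Fin (d+1)) (Fin (d+1)) K))) : Set (UniversalEnvelopingAlgebra K (Matrix (Fin (d+1)) (Fin (d+1)) K))) := by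
      have h1 : z ∈ Subalgebra.toSubmodule (Algebra.adjoin K
          {w : UniversalEnvelopingAlgebra K (Matrix (Fin (d+1)) (Fin (d+1)) K) | ∃ i ∈ J, ∃ j ∉ J, w = ι K (Matrix.single i j (1:K))}) := by
        rw [Subalgebra.mem_toSubmodule, ← hAJ]; exact hzA
      rwa [Algebra.adjoin_eq_span] at h1
    rw [Submodule.mem_span_set'] at hzA'
    obtain ⟨n, f, g, hg⟩ := hzA'
    have hpair : ∀ i : Fin n, ∃ Lp : List (Fin (d+1) × Fin (d+1)),
        (∀ p ∈ Lp, ST10.Ok J p) ∧ ((Lp.map (ST10.xg K)).prod = (g i : UniversalEnvelopingAlgebra K (Matrix (Fin (d+1)) (Fin (d+1)) K))) := by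
      intro i
      have hcl : (g i : UniversalEnvelopingAlgebra K (Matrix (Fin (d+1)) (Fin (d+1)) K)) ∈ Submonoid.closure {w : UniversalEnvelopingAlgebra K (Matrix (Fin (d+1)) (Fin (d+1)) K) | ∃ i ∈ J, ∃ j ∉ J,
          w = ι K (Matrix.single i j (1:K))} := (g i).2
      obtain ⟨l, hl, hlprod⟩ := Submonoid.exists_list_of_mem_closure hcl
      obtain ⟨Lp, h1, h2⟩ := ST10.exists_pairs l (fun u hu => hl u hu)
      exact ⟨Lp, h1, by rw [h2, hlprod]⟩
    choose Li hok hprod using hpair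
    -- coefficient relations
    have hz0' : (∑ i : Fin n,
        (f i * ((ST10.Lam (((Li i).map Prod.snd : List (Fin (d+1))) : Multiset (Fin (d+1)))) : K)) •
          Finsupp.single (ST10.nu (Li i)) (1:K)) = 0 := by
      rw [← hz0, ← hg, map_sum, LinearMap.sum_apply]
      refine Finset.sum_congr rfl fun i _ => ?_
      rw [map_smul, LinearMap.smul_apply, ← hprod i, ST10.rho_prod ρ' hρ'₁ (Li i) (hok i),
        ← Int.cast_smul_eq_zsmul K, smul_smul]
    have hclass : ∀ i0 : Fin n,
        ∑ i ∈ Finset.univ.filter (fun i => ST10.nu (Li i) = ST10.nu (Li i0)), f i = 0 := by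
      intro i0
      have happ := congrArg (fun F : (Fin (d+1) → ℤ) →₀ K => F (ST10.nu (Li i0))) hz0'
      simp only [Finsupp.finset_sum_apply, Finsupp.smul_apply, Finsupp.single_apply,
        smul_eq_mul, mul_ite, mul_one, mul_zero, Finsupp.coe_zero, Pi.zero_apply] at happ
      rw [← Finset.sum_filter] at happ
      have hconst : ∀ i ∈ Finset.univ.filter (fun i => ST10.nu (Li i) = ST10.nu (Li i0)),
          f i * ((ST10.Lam (((Li i).map Prod.snd : List (Fin (d+1))) : Multiset (Fin (d+1)))) : K)
          = f i * ((ST10.Lam (((Li i0).map Prod.snd : List (Fin (d+1))) : Multiset (Fin (d+1)))) : K) := by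
        intro i hi
        have hni : ST10.nu (Li i) = ST10.nu (Li i0) := (Finset.mem_filter.1 hi).2
        have hperm := (ST10.perm_of_nu_eq (Li i) (Li i0) (hok i) (hok i0) hni).2
        rw [show (((Li i).map Prod.snd : List (Fin (d+1))) : Multiset (Fin (d+1)))
            = (((Li i0).map Prod.snd : List (Fin (d+1))) : Multiset (Fin (d+1))) from
          Multiset.coe_eq_coe.2 hperm]
      rw [Finset.sum_congr rfl hconst, ← Finset.sum_mul] at happ
      have hLne : ((ST10.Lam (((Li i0).map Prod.snd : List (Fin (d+1))) : Multiset (Fin (d+1)))) : K) ≠ 0 := by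
        exact_mod_cast Int.cast_ne_zero.2 (ST10.Lam_ne_zero _)
      exact (mul_eq_zero.1 happ).resolve_right hLne
    -- reassemble z
    have hzsum : z = ∑ i : Fin n, f i • ((Li i).map (ST10.xg K)).prod := by
      rw [← hg]
      exact (Finset.sum_congr rfl fun i _ => by rw [hprod i]).symm
    have hfib := Finset.sum_fiberwise_of_maps_to
      (s := (Finset.univ : Finset (Fin n)))
      (t := Finset.univ.image (fun i => ST10.nu (Li i)))
      (g := fun i => ST10.nu (Li i))
      (fun i _ => Finset.mem_image_of_mem _ (Finset.mem_univ i))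
      (fun i => f i • ((Li i).map (ST10.xg K)).prod)
    rw [hzsum, ← hfib]
    refine Submodule.sum_mem _ fun v hv => ?_
    obtain ⟨i0, _, hi0⟩ := Finset.mem_image.1 hv
    subst hi0
    have hsum0 : (∑ i ∈ Finset.univ.filter (fun i => ST10.nu (Li i) = ST10.nu (Li i0)), f i)
        • ((Li i0).map (ST10.xg K)).prod = 0 := by
      rw [hclass i0, zero_smul]
    have hrw : ∑ i ∈ Finset.univ.filter (fun i => ST10.nu (Li i) = ST10.nu (Li i0)),
          f i • ((Li i).map (ST10.xg K)).prod
        = ∑ i ∈ Finset.univ.filter (fun i => ST10.nu (Li i) = ST10.nu (Li i0)),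
          f i • (((Li i).map (ST10.xg K)).prod - ((Li i0).map (ST10.xg K)).prod) := by
      rw [Finset.sum_congr rfl (fun i _ => smul_sub (f i) _ _), Finset.sum_sub_distrib,
        ← Finset.sum_smul, hclass i0, zero_smul, sub_zero]
    rw [hrw]
    refine Submodule.sum_mem _ fun i hi => Submodule.smul_mem _ _ ?_
    have hni : ST10.nu (Li i) = ST10.nu (Li i0) := (Finset.mem_filter.1 hi).2
    obtain ⟨hperm1, hperm2⟩ := ST10.perm_of_nu_eq (Li i) (Li i0) (hok i) (hok i0) hni
    exact ST10.conn hgen (Li i) (Li i0) (hok i) (hok i0) hperm1 hperm2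
  · -- easy direction
    intro z hz
    rw [SetLike.mem_coe] at hz
    have hsub : Submodule.span K (ST10.Rel J AJ) ≤
        (Subalgebra.toSubmodule AJ) ⊓
          LinearMap.ker ((LinearMap.applyₗ (Finsupp.single (0 : Fin (d+1) → ℤ) (1:K))).comp
            ρ'.toLinearMap) := by
      rw [Submodule.span_le]
      rintro w ⟨a, ha, i, hi, k, hk, j, hj, l, hl, rfl⟩
      have hik : ST10.Ok J ((i, j) : Fin (d+1) × Fin (d+1)) := ⟨hi, hj⟩
      have hkl : ST10.Ok J ((k, l) : Fin (d+1) × Fin (d+1)) := ⟨hk, hl⟩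
      have hil : ST10.Ok J ((i, l) : Fin (d+1) × Fin (d+1)) := ⟨hi, hl⟩
      have hkj : ST10.Ok J ((k, j) : Fin (d+1) × Fin (d+1)) := ⟨hk, hj⟩
      rw [SetLike.mem_coe, Submodule.mem_inf]
      constructor
      · -- membership in AJ
        rw [Subalgebra.mem_toSubmodule]
        exact mul_mem ha (sub_mem
          (mul_mem (hgen _ hik) (hgen _ hkl)) (mul_mem (hgen _ hil) (hgen _ hkj)))
      · -- membership in kernel
        rw [LinearMap.mem_ker, LinearMap.comp_apply]
        have e1 := ST10.rho_prod ρ' hρ'₁ [((i, j) : Fin (d+1) × Fin (d+1)), (k, l)]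
          (by intro q hq; rcases List.mem_cons.1 hq with h | h
              · exact h ▸ hik
              · rcases List.mem_cons.1 h with h' | h'
                · exact h' ▸ hkl
                · simp at h')
        have e2 := ST10.rho_prod ρ' hρ'₁ [((i, l) : Fin (d+1) × Fin (d+1)), (k, j)]
          (by intro q hq; rcases List.mem_cons.1 hq with h | h
              · exact h ▸ hil
              · rcases List.mem_cons.1 h with h' | h'
                · exact h' ▸ hkj
                · simp at h')
        have hpe1 : (([((i, j) : Fin (d+1) × Fin (d+1)), (k, l)]).map (ST10.xg K)).prod
            = ST10.xg K (i, j) * ST10.xg K (k, l) := by simp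
        have hpe2 : (([((i, l) : Fin (d+1) × Fin (d+1)), (k, j)]).map (ST10.xg K)).prod
            = ST10.xg K (i, l) * ST10.xg K (k, j) := by simp
        rw [hpe1] at e1
        rw [hpe2] at e2
        have hLam : ST10.Lam ((([((i, j) : Fin (d+1) × Fin (d+1)), (k, l)]).map Prod.snd :
              List (Fin (d+1))) : Multiset (Fin (d+1)))
            = ST10.Lam ((([((i, l) : Fin (d+1) × Fin (d+1)), (k, j)]).map Prod.snd :
              List (Fin (d+1))) : Multiset (Fin (d+1))) := by
          congr 1
          rw [Multiset.coe_eq_coe]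
          exact List.Perm.swap l j []
        have hnu : ST10.nu [((i, j) : Fin (d+1) × Fin (d+1)), (k, l)]
            = ST10.nu [((i, l) : Fin (d+1) × Fin (d+1)), (k, j)] := by
          simp only [ST10.nu]
          abel
        have hz' : ρ' (ST10.xg K (i, j) * ST10.xg K (k, l)
            - ST10.xg K (i, l) * ST10.xg K (k, j)) (Finsupp.single 0 (1:K)) = 0 := by
          rw [map_sub, LinearMap.sub_apply, e1, e2, hLam, hnu, sub_self]
        show ρ' (a * (ST10.xg K (i, j) * ST10.xg K (k, l)
            - ST10.xg K (i, l) * ST10.xg K (k, j))) (Finsupp.single (0 : Fin (d+1) → ℤ) (1:K)) = 0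
        rw [map_mul, Module.End.mul_apply, hz', map_zero]
    have hmem := hsub hz
    rw [Submodule.mem_inf] at hmem
    refine ⟨(Subalgebra.mem_toSubmodule AJ).1 hmem.1, ?_⟩
    have hker := hmem.2
    rw [LinearMap.mem_ker, LinearMap.comp_apply] at hker
    exact hker
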